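/- For the two-vertex graph with self-loops and mutual edges (adjacency matrix with all entries 1 on a 2-vertex complete graph with loops), with replacement matrices [[a_i, m − a_i],[m − b_i, b_i]] at vertex i ∈ {1,2}, the equilibrium proportions at both vertices equal (1 − (b₁+b₂)/(2m)) / (2 − (a₁+a₂)/(2m) − (b₁+b₂)/(2m)), assuming a₁+a₂+b₁+b₂ < 4m. -/

import Mathlib

open Matrix

theorem stmt_17 (m a₁ a₂ b₁ b₂ : ℝ) (hm : 0 < m)
    (ha₁ : a₁ ∈ Set.Icc 0 m) (ha₂ : a₂ ∈ Set.Icc 0 m)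
    (hb₁ : b₁ ∈ Set.Icc 0 m) (hb₂ : b₂ ∈ Set.Icc 0 m)
    (hsum : a₁ + a₂ + b₁ + b₂ < 4 * m)
    (Atil : Matrix (Fin 2) (Fin 2) ℝ) (hA : Atil = (1 / 2 : ℝ) • Matrix.of fun _ _ => 1)
    (C : Matrix (Fin 2) (Fin 2) ℝ) (hC : C = Matrix.diagonal ![a₁ + b₁ - m, a₂ + b₂ - m])
    (bv : Fin 2 → ℝ) (hbv : bv = ![b₁, b₂]) :
    ∀ z : Fin 2 → ℝ,
      Matrix.vecMul z ((1 : Matrix (Fin 2) (Fin 2) ℝ) - m⁻¹ • (C * Atil)) =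
          Matrix.vecMul (fun i => 1 - bv i / m) Atil ↔
        z = fun _ =>
          (1 - (b₁ + b₂) / (2 * m)) /
            (2 - (a₁ + a₂) / (2 * m) - (b₁ + b₂) / (2 * m)) := by
  subst hA hC hbv
  intro z
  have hm' : m ≠ 0 := ne_of_gt hm
  have hD : 2 - (a₁ + a₂) / (2 * m) - (b₁ + b₂) / (2 * m) ≠ 0 := by
    intro h
    have : a₁ + a₂ + b₁ + b₂ = 4 * m := by
      field_simp at h; linarith
    linarith
  constructor
  · intro h
    rw [funext_iff, Fin.forall_fin_two] at h
    obtain ⟨h1, h2⟩ := h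
    simp [Matrix.vecMul, Matrix.mul_apply, dotProduct, Fin.sum_univ_two,
      Matrix.one_apply, Matrix.sub_apply, Matrix.diagonal, Matrix.smul_apply] at h1 h2
    field_simp at h1 h2
    have hz : z 0 = z 1 := by
      have h8 : (8 * m ^ 3) * (z 0 - z 1) = 0 := by linear_combination (4 * m ^ 2) * (h1 - h2)
      have h8m : (8 * m ^ 3) ≠ 0 := by positivity
      have := (mul_eq_zero.mp h8).resolve_left h8m
      linarith
    funext i
    fin_cases i
    · show z 0 = _
      rw [eq_div_iff hD]
      field_simp
      linear_combination h1 - (a₂ + b₂ - m) * hz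
    · show z 1 = _
      rw [eq_div_iff hD]
      field_simp
      linear_combination h1 - (2 * m - (a₁ + b₁ - m)) * hz
  · rintro rfl
    funext j
    fin_cases j <;>
    · simp [Matrix.vecMul, Matrix.mul_apply, dotProduct, Fin.sum_univ_two,
        Matrix.one_apply, Matrix.sub_apply, Matrix.diagonal, Matrix.smul_apply]
      have hu := div_mul_cancel₀ (1 - (b₁ + b₂) / (2 * m)) hD
      have hmm : m * m⁻¹ = 1 := mul_inv_cancel₀ hm'
      linear_combination hu +
        ((1 - b₁ * m⁻¹ / 2 - b₂ * m⁻¹ / 2) *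
          (2 - (a₁ + a₂) / (2 * m) - (b₁ + b₂) / (2 * m))⁻¹) * hmm
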